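/- Let p, q ∈ ℕ², let (a₁,b₁), …, (a_k,b_k) and (c₁,d₁), …, (c_l,d_l) be pairs of positive integers such that the inclinations a₁/b₁, …, a_k/b_k are pairwise distinct and the inclinations c₁/d₁, …, c_l/d_l are pairwise distinct. If the Minkowski sums {p} + Teis(a₁,b₁) + ⋯ + Teis(a_k,b_k) and {q} + Teis(c₁,d₁) + ⋯ + Teis(c_l,d_l) are equal as subsets of ℝ², then p = q, k = l, and the multiset of pairs {(a₁,b₁),…,(a_k,b_k)} equals the multiset {(c₁,d₁),…,(c_l,d_l)}. In particular, the set of inclinations appearing in such a decomposition of a Newton diagram does not depend on the choice of decomposition. -/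

import Mathlib

open Pointwise

/-- The closed first quadrant `ℝ₊² = [0,∞)²` of `ℝ²`. -/
def firstQuadrant : Set (ℝ × ℝ) := {p | 0 ≤ p.1 ∧ 0 ≤ p.2}

/-- The elementary Newton diagram `Teis(a,b) = conv{(0,b),(a,0)} + ℝ₊²`. -/
noncomputable def Teis (a b : ℕ) : Set (ℝ × ℝ) :=
  convexHull ℝ {((0 : ℝ), (b : ℝ)), ((a : ℝ), (0 : ℝ))} + firstQuadrant



private lemma exists_pos_le' {m : ℕ} (f : Fin m → ℝ) (hf : ∀ i, 0 < f i) :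
    ∃ ε > 0, ∀ i, ε ≤ f i := by
  rcases Nat.eq_zero_or_pos m with h | h
  · subst h; exact ⟨1, one_pos, fun i => i.elim0⟩
  · have hne : (Finset.univ : Finset (Fin m)).Nonempty := by
      simpa [Finset.univ_nonempty_iff] using Fin.pos_iff_nonempty.mp h
    refine ⟨Finset.univ.inf' hne f, ?_, fun i => Finset.inf'_le f (Finset.mem_univ i)⟩
    rw [gt_iff_lt, Finset.lt_inf'_iff]
    exact fun i _ => hf i

private lemma sum_lb {ι : Type*} (u v : ℝ) (s : Finset ι) (S : ι → Set (ℝ × ℝ)) (L : ι → ℝ)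
    (h : ∀ i ∈ s, ∀ z ∈ S i, L i ≤ u * z.1 + v * z.2) :
    ∀ z ∈ ∑ i ∈ s, S i, ∑ i ∈ s, L i ≤ u * z.1 + v * z.2 := by
  induction s using Finset.cons_induction with
  | empty =>
    intro z hz
    simp only [Finset.sum_empty] at *
    have : z = 0 := by simpa using hz
    simp [this]
  | cons i s hi ih =>
    intro z hz
    rw [Finset.sum_cons] at hz
    obtain ⟨x, hx, y, hy, rfl⟩ := Set.mem_add.mp hz
    rw [Finset.sum_cons]
    have h1 := h i (Finset.mem_cons_self i s) x hx
    have h2 := ih (fun j hj => h j (Finset.mem_cons_of_mem hj)) y hy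
    have hc : u * (x + y).1 + v * (x + y).2
        = (u * x.1 + v * x.2) + (u * y.1 + v * y.2) := by
      simp [Prod.fst_add, Prod.snd_add]; ring
    linarith

private lemma sum_attain {ι : Type*} (u v : ℝ) (s : Finset ι) (S : ι → Set (ℝ × ℝ)) (L : ι → ℝ)
    (h : ∀ i ∈ s, ∃ z ∈ S i, u * z.1 + v * z.2 = L i) :
    ∃ z ∈ ∑ i ∈ s, S i, u * z.1 + v * z.2 = ∑ i ∈ s, L i := by
  induction s using Finset.cons_induction with
  | empty =>
    refine ⟨0, ?_, by simp⟩
    simp only [Finset.sum_empty]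
    exact Set.zero_mem_zero
  | cons i s hi ih =>
    obtain ⟨x, hx, hx'⟩ := h i (Finset.mem_cons_self i s)
    obtain ⟨y, hy, hy'⟩ := ih (fun j hj => h j (Finset.mem_cons_of_mem hj))
    refine ⟨x + y, ?_, ?_⟩
    · rw [Finset.sum_cons]; exact Set.add_mem_add hx hy
    · rw [Finset.sum_cons]
      have hc : u * (x + y).1 + v * (x + y).2
          = (u * x.1 + v * x.2) + (u * y.1 + v * y.2) := by
        simp [Prod.fst_add, Prod.snd_add]; ring
      rw [hc, hx', hy']

private lemma Teis_lb (a b : ℕ) (u v : ℝ) (hu : 0 ≤ u) (hv : 0 ≤ v) :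
    ∀ z ∈ Teis a b, min (u * a) (v * b) ≤ u * z.1 + v * z.2 := by
  intro z hz
  obtain ⟨w, hw, y, hy, rfl⟩ := Set.mem_add.mp hz
  rw [convexHull_pair, segment_eq_image] at hw
  obtain ⟨θ, hθ, rfl⟩ := hw
  obtain ⟨hθ0, hθ1⟩ := hθ
  obtain ⟨hy1, hy2⟩ := hy
  have h1 : min (u * a) (v * b) ≤ u * a := min_le_left _ _
  have h2 : min (u * a) (v * b) ≤ v * b := min_le_right _ _
  have e1 : ((1 - θ) • ((0 : ℝ), (b : ℝ)) + θ • ((a : ℝ), (0 : ℝ)) + y).1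
      = θ * a + y.1 := by simp
  have e2 : ((1 - θ) • ((0 : ℝ), (b : ℝ)) + θ • ((a : ℝ), (0 : ℝ)) + y).2
      = (1 - θ) * b + y.2 := by simp
  rw [e1, e2]
  nlinarith [mul_le_mul_of_nonneg_left h1 hθ0,
    mul_le_mul_of_nonneg_left h2 (by linarith : (0:ℝ) ≤ 1 - θ),
    mul_nonneg hu hy1, mul_nonneg hv hy2]

private lemma Teis_attain (a b : ℕ) (u v : ℝ) :
    ∃ z ∈ Teis a b, u * z.1 + v * z.2 = min (u * a) (v * b) := by
  rcases le_total (u * a) (v * b) with h | h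
  · refine ⟨((a : ℝ), 0) + 0, Set.add_mem_add ?_ ?_, ?_⟩
    · exact subset_convexHull ℝ _ (by simp)
    · exact ⟨le_refl 0, le_refl 0⟩
    · simp [min_eq_left h]
  · refine ⟨((0 : ℝ), (b : ℝ)) + 0, Set.add_mem_add ?_ ?_, ?_⟩
    · exact subset_convexHull ℝ _ (by simp)
    · exact ⟨le_refl 0, le_refl 0⟩
    · simp [min_eq_right h]

private lemma diagram_lb (P : ℕ × ℕ) {m : ℕ} (A B : Fin m → ℕ) (u v : ℝ)
    (hu : 0 ≤ u) (hv : 0 ≤ v) :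
    ∀ z ∈ {(((P.1 : ℝ), (P.2 : ℝ)) : ℝ × ℝ)} + firstQuadrant + ∑ i : Fin m, Teis (A i) (B i),
      u * P.1 + v * P.2 + ∑ i : Fin m, min (u * A i) (v * B i) ≤ u * z.1 + v * z.2 := by
  intro z hz
  obtain ⟨x, hx, y, hy, rfl⟩ := Set.mem_add.mp hz
  obtain ⟨x1, hx1, x2, hx2, rfl⟩ := Set.mem_add.mp hx
  rw [Set.mem_singleton_iff] at hx1
  subst hx1
  obtain ⟨hx21, hx22⟩ := hx2
  have hsum := sum_lb u v Finset.univ (fun i => Teis (A i) (B i))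
    (fun i => min (u * A i) (v * B i))
    (fun i _ => Teis_lb (A i) (B i) u v hu hv) y hy
  have hc : u * (((P.1 : ℝ), (P.2 : ℝ)) + x2 + y).1 + v * (((P.1 : ℝ), (P.2 : ℝ)) + x2 + y).2
      = (u * P.1 + v * P.2) + (u * x2.1 + v * x2.2) + (u * y.1 + v * y.2) := by
    simp [Prod.fst_add, Prod.snd_add]; ring
  rw [hc]
  have h2 : 0 ≤ u * x2.1 + v * x2.2 := by positivity
  linarith

private lemma diagram_attain (P : ℕ × ℕ) {m : ℕ} (A B : Fin m → ℕ) (u v : ℝ) :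
    ∃ z ∈ {(((P.1 : ℝ), (P.2 : ℝ)) : ℝ × ℝ)} + firstQuadrant + ∑ i : Fin m, Teis (A i) (B i),
      u * z.1 + v * z.2 = u * P.1 + v * P.2 + ∑ i : Fin m, min (u * A i) (v * B i) := by
  obtain ⟨y, hy, hy'⟩ := sum_attain u v Finset.univ (fun i => Teis (A i) (B i))
    (fun i => min (u * A i) (v * B i)) (fun i _ => Teis_attain (A i) (B i) u v)
  refine ⟨((P.1 : ℝ), (P.2 : ℝ)) + 0 + y,
    Set.add_mem_add (Set.add_mem_add rfl ⟨le_refl 0, le_refl 0⟩) hy, ?_⟩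
  have hc : u * (((P.1 : ℝ), (P.2 : ℝ)) + 0 + y).1 + v * (((P.1 : ℝ), (P.2 : ℝ)) + 0 + y).2
      = (u * P.1 + v * P.2) + (u * y.1 + v * y.2) := by
    simp [Prod.fst_add, Prod.snd_add]; ring
  rw [hc, hy']

private lemma Tcalc (A B : ℕ) (hA : 0 < A) (r ε : ℝ) (hε : 0 < ε)
    (hfar : (B : ℝ) / (A : ℝ) ≠ r → ε ≤ |r - (B : ℝ) / (A : ℝ)|) :
    min ((r + ε) * A) (B : ℝ) + min ((r - ε) * A) (B : ℝ) - 2 * min (r * A) (B : ℝ)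
      = if (B : ℝ) / (A : ℝ) = r then -ε * A else 0 := by
  have hA' : (0 : ℝ) < A := by exact_mod_cast hA
  by_cases h : (B : ℝ) / (A : ℝ) = r
  · rw [if_pos h]
    have hB : (B : ℝ) = r * A := by
      field_simp at h; linarith
    rw [min_eq_right (by nlinarith), min_eq_left (by nlinarith),
      min_eq_right (by nlinarith), hB]
    ring
  · rw [if_neg h]
    have hd := hfar h
    rcases lt_or_gt_of_ne h with hlt | hgt
    · -- B/A < r : all mins equal B
      rw [abs_of_pos (by linarith)] at hd
      have hB : (B : ℝ) ≤ (r - ε) * A := by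
        rw [← div_le_iff₀ hA'] at *; linarith
      rw [min_eq_right (by nlinarith), min_eq_right hB, min_eq_right (by nlinarith)]
      ring
    · -- B/A > r : all mins linear
      rw [abs_of_neg (by linarith)] at hd
      have hB : (r + ε) * A ≤ (B : ℝ) := by
        rw [← le_div_iff₀ hA'] at *; linarith
      rw [min_eq_left hB, min_eq_left (by nlinarith), min_eq_left (by nlinarith)]
      ring

private lemma ratio_eq_iff {k : ℕ} (a b : Fin k → ℕ)
    (ha : ∀ i, 0 < a i) (hb : ∀ i, 0 < b i)
    (hab : ∀ i j : Fin k, (a i : ℚ) / (b i : ℚ) = (a j : ℚ) / (b j : ℚ) → i = j)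
    (i i' : Fin k) (h : (b i' : ℝ) / (a i' : ℝ) = (b i : ℝ) / (a i : ℝ)) : i' = i := by
  apply hab
  have hai : (0 : ℝ) < a i := by exact_mod_cast ha i
  have hai' : (0 : ℝ) < a i' := by exact_mod_cast ha i'
  rw [div_eq_div_iff hai'.ne' hai.ne'] at h
  have hn : b i' * a i = b i * a i' := by exact_mod_cast h
  have hq : (b i' : ℚ) * a i = (b i : ℚ) * a i' := by exact_mod_cast hn
  have hbi : (0 : ℚ) < b i := by exact_mod_cast hb i
  have hbi' : (0 : ℚ) < b i' := by exact_mod_cast hb i'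
  rw [div_eq_div_iff hbi'.ne' hbi.ne']
  linarith

private lemma match_lemma {k l : ℕ} (a b : Fin k → ℕ) (c d : Fin l → ℕ)
    (ha : ∀ i, 0 < a i) (hb : ∀ i, 0 < b i) (hc : ∀ i, 0 < c i) (hd : ∀ i, 0 < d i)
    (hab : ∀ i j : Fin k, (a i : ℚ) / (b i : ℚ) = (a j : ℚ) / (b j : ℚ) → i = j)
    (hcd : ∀ i j : Fin l, (c i : ℚ) / (d i : ℚ) = (c j : ℚ) / (d j : ℚ) → i = j)
    (key2 : ∀ u : ℝ, 0 ≤ u →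
      ∑ i : Fin k, min (u * a i) ((b i : ℝ)) = ∑ j : Fin l, min (u * c j) ((d j : ℝ))) :
    ∀ i : Fin k, ∃ j : Fin l, c j = a i ∧ d j = b i := by
  intro i
  have hai : (0 : ℝ) < a i := by exact_mod_cast ha i
  have hbi : (0 : ℝ) < b i := by exact_mod_cast hb i
  set r : ℝ := (b i : ℝ) / (a i : ℝ) with hr_def
  have hr : 0 < r := div_pos hbi hai
  obtain ⟨ε₁, hε₁, h1⟩ := exists_pos_le'
    (fun i' => if (b i' : ℝ) / (a i' : ℝ) = r then r else |r - (b i' : ℝ) / (a i' : ℝ)|)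
    (fun i' => by
      split
      · exact hr
      · exact abs_pos.mpr (sub_ne_zero.mpr (Ne.symm ‹_›)))
  obtain ⟨ε₂, hε₂, h2⟩ := exists_pos_le'
    (fun j => if (d j : ℝ) / (c j : ℝ) = r then r else |r - (d j : ℝ) / (c j : ℝ)|)
    (fun j => by
      split
      · exact hr
      · exact abs_pos.mpr (sub_ne_zero.mpr (Ne.symm ‹_›)))
  set ε : ℝ := min r (min ε₁ ε₂) with hε_def
  have hε : 0 < ε := lt_min hr (lt_min hε₁ hε₂)
  have hεr : ε ≤ r := min_le_left _ _
  have hfar1 : ∀ i', (b i' : ℝ) / (a i' : ℝ) ≠ r → ε ≤ |r - (b i' : ℝ) / (a i' : ℝ)| := by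
    intro i' hne
    have := h1 i'
    rw [if_neg hne] at this
    calc ε ≤ ε₁ := le_trans (min_le_right _ _) (min_le_left _ _)
    _ ≤ _ := this
  have hfar2 : ∀ j, (d j : ℝ) / (c j : ℝ) ≠ r → ε ≤ |r - (d j : ℝ) / (c j : ℝ)| := by
    intro j hne
    have := h2 j
    rw [if_neg hne] at this
    calc ε ≤ ε₂ := le_trans (min_le_right _ _) (min_le_right _ _)
    _ ≤ _ := this
  have E1 := key2 (r + ε) (by linarith)
  have E2 := key2 (r - ε) (by linarith)
  have E3 := key2 r hr.le
  have comb : ∑ i' : Fin k, (min ((r + ε) * a i') ((b i' : ℝ))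
        + min ((r - ε) * a i') ((b i' : ℝ)) - 2 * min (r * a i') ((b i' : ℝ)))
      = ∑ j : Fin l, (min ((r + ε) * c j) ((d j : ℝ))
        + min ((r - ε) * c j) ((d j : ℝ)) - 2 * min (r * c j) ((d j : ℝ))) := by
    rw [Finset.sum_sub_distrib, Finset.sum_add_distrib, Finset.sum_sub_distrib,
      Finset.sum_add_distrib, ← Finset.mul_sum, ← Finset.mul_sum, E1, E2, E3]
  rw [Finset.sum_congr rfl (fun i' _ => Tcalc (a i') (b i') (ha i') r ε hε (hfar1 i')),
    Finset.sum_congr rfl (fun j _ => Tcalc (c j) (d j) (hc j) r ε hε (hfar2 j))] at comb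
  have Lval : ∑ i' : Fin k, (if (b i' : ℝ) / (a i' : ℝ) = r then -ε * a i' else 0)
      = -ε * a i := by
    rw [Finset.sum_eq_single_of_mem i (Finset.mem_univ i)
      (fun i' _ hne => if_neg (fun hr' => hne (ratio_eq_iff a b ha hb hab i i' hr')))]
    rw [if_pos rfl]
  rw [Lval] at comb
  have hex : ∃ j, (d j : ℝ) / (c j : ℝ) = r := by
    by_contra hno
    push_neg at hno
    rw [Finset.sum_eq_zero (fun j _ => if_neg (hno j))] at comb
    nlinarith
  obtain ⟨j, hj⟩ := hex
  have Rval : ∑ j' : Fin l, (if (d j' : ℝ) / (c j' : ℝ) = r then -ε * c j' else 0)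
      = -ε * c j := by
    rw [Finset.sum_eq_single_of_mem j (Finset.mem_univ j)
      (fun j' _ hne => if_neg (fun hr' => hne
        (ratio_eq_iff c d hc hd hcd j j' (hr'.trans hj.symm))))]
    rw [if_pos hj]
  rw [Rval] at comb
  have hcj : (c j : ℝ) = (a i : ℝ) := by
    have : ε * (a i : ℝ) = ε * (c j : ℝ) := by linarith
    exact mul_left_cancel₀ hε.ne' this.symm
  have hcj' : c j = a i := by exact_mod_cast hcj
  refine ⟨j, hcj', ?_⟩
  have hcjpos : (0 : ℝ) < c j := by exact_mod_cast hc j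
  have hdj : (d j : ℝ) = (b i : ℝ) := by
    rw [div_eq_div_iff hcjpos.ne' hai.ne'] at hj
    rw [hcj] at hj
    exact mul_right_cancel₀ hai.ne' hj
  exact_mod_cast hdj


/-- Uniqueness of the decomposition of a Newton diagram as a Minkowski
sum of a point of `ℕ²` and elementary Newton diagrams with pairwise distinct
inclinations: the point, the number of elementary diagrams and the multiset of pairs
`(aᵢ, bᵢ)` are uniquely determined.
(The empty Minkowski sum of Newton diagrams is `ℝ₊²`, the neutral element of the
semigroup of Newton diagrams; since `Teis a b + ℝ₊² = Teis a b`, including the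
summand `ℝ₊²` is harmless when the lists are nonempty.) -/
theorem Teis_decomposition_unique (p q : ℕ × ℕ) (k l : ℕ)
    (a b : Fin k → ℕ) (c d : Fin l → ℕ)
    (ha : ∀ i, 0 < a i) (hb : ∀ i, 0 < b i) (hc : ∀ i, 0 < c i) (hd : ∀ i, 0 < d i)
    (hab : ∀ i j : Fin k, (a i : ℚ) / (b i : ℚ) = (a j : ℚ) / (b j : ℚ) → i = j)
    (hcd : ∀ i j : Fin l, (c i : ℚ) / (d i : ℚ) = (c j : ℚ) / (d j : ℚ) → i = j)
    (heq : {(((p.1 : ℝ), (p.2 : ℝ)) : ℝ × ℝ)} + firstQuadrant +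
        ∑ i : Fin k, Teis (a i) (b i) =
      {(((q.1 : ℝ), (q.2 : ℝ)) : ℝ × ℝ)} + firstQuadrant +
        ∑ i : Fin l, Teis (c i) (d i)) :
    p = q ∧ k = l ∧
      Multiset.map (fun i => (a i, b i)) Finset.univ.val =
        Multiset.map (fun i => (c i, d i)) Finset.univ.val := by
  have key : ∀ u v : ℝ, 0 ≤ u → 0 ≤ v →
      u * p.1 + v * p.2 + ∑ i : Fin k, min (u * a i) (v * b i)
        = u * q.1 + v * q.2 + ∑ j : Fin l, min (u * c j) (v * d j) := by
    intro u v hu hv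
    obtain ⟨z, hz, hz'⟩ := diagram_attain p a b u v
    rw [heq] at hz
    have h1 := diagram_lb q c d u v hu hv z hz
    obtain ⟨w, hw, hw'⟩ := diagram_attain q c d u v
    rw [← heq] at hw
    have h2 := diagram_lb p a b u v hu hv w hw
    linarith
  have e1 : ∀ n : ℕ, min ((n : ℝ)) 0 = 0 := fun n => min_eq_right (Nat.cast_nonneg _)
  have e2 : ∀ n : ℕ, min (0 : ℝ) ((n : ℝ)) = 0 := fun n => min_eq_left (Nat.cast_nonneg _)
  have h10 := key 1 0 zero_le_one le_rfl
  have h01 := key 0 1 le_rfl zero_le_one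
  simp only [one_mul, zero_mul, e1, e2, Finset.sum_const_zero, add_zero, zero_add] at h10 h01
  have hp1 : p.1 = q.1 := by exact_mod_cast h10
  have hp2 : p.2 = q.2 := by exact_mod_cast h01
  have hpq : p = q := Prod.ext hp1 hp2
  have c1 : (p.1 : ℝ) = (q.1 : ℝ) := by exact_mod_cast hp1
  have c2 : (p.2 : ℝ) = (q.2 : ℝ) := by exact_mod_cast hp2
  have key2 : ∀ u : ℝ, 0 ≤ u →
      ∑ i : Fin k, min (u * a i) ((b i : ℝ)) = ∑ j : Fin l, min (u * c j) ((d j : ℝ)) := by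
    intro u hu
    have h := key u 1 hu zero_le_one
    simp only [one_mul] at h
    rw [c1, c2] at h
    linarith
  have m1 := match_lemma a b c d ha hb hc hd hab hcd key2
  have m2 := match_lemma c d a b hc hd ha hb hcd hab (fun u hu => (key2 u hu).symm)
  choose e he1 he2 using m1
  choose f hf1 hf2 using m2
  have einj : Function.Injective e := by
    intro i i' hii
    apply hab
    have g1 : a i = a i' := by rw [← he1 i, ← he1 i', hii]
    have g2 : b i = b i' := by rw [← he2 i, ← he2 i', hii]
    rw [g1, g2]
  have finj : Function.Injective f := by
    intro j j' hjj
    apply hcd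
    have g1 : c j = c j' := by rw [← hf1 j, ← hf1 j', hjj]
    have g2 : d j = d j' := by rw [← hf2 j, ← hf2 j', hjj]
    rw [g1, g2]
  have hkl : k = l := le_antisymm
    (by simpa using Fintype.card_le_of_injective e einj)
    (by simpa using Fintype.card_le_of_injective f finj)
  subst hkl
  refine ⟨hpq, rfl, ?_⟩
  have hbij : Function.Bijective e := Finite.injective_iff_bijective.mp einj
  have hmap : Multiset.map e Finset.univ.val = Finset.univ.val := by
    have h := congrArg Finset.val (Finset.map_univ_equiv (Equiv.ofBijective e hbij))
    rw [Finset.map_val] at h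
    exact h
  calc Multiset.map (fun i => (a i, b i)) Finset.univ.val
      = Multiset.map ((fun j => (c j, d j)) ∘ e) Finset.univ.val := by
        apply Multiset.map_congr rfl
        intro i _
        simp [Function.comp, he1, he2]
    _ = Multiset.map (fun j => (c j, d j)) (Multiset.map e Finset.univ.val) := by
        rw [Multiset.map_map]
    _ = Multiset.map (fun j => (c j, d j)) Finset.univ.val := by rw [hmap]
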